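/- Let G be a group and S ⊆ G a finite symmetric generating set (S = S⁻¹, 1 ∉ S), and let Θ = (C,D) be a tileset over (G,S). Then the following are equivalent: (1) G admits a strong infinite Θ-snake; (2) there exists an infinite subset X ⊆ G that is connected in the Cayley graph of (G,S) (any two elements of X are joined by a finite path inside X each of whose steps lies in S), together with a colouring x : X → C such that (x(g), s, x(g·s)) ∈ D for every g ∈ X and s ∈ S with g·s ∈ X. -/

import Mathlib

open Pointwise

private lemma snake_path_mem_pow {G : Type} [Group G] [DecidableEq G] (S : Finset G) (p : ℕ → G) :
    ∀ k : ℕ, (∀ i < k, (p i)⁻¹ * p (i + 1) ∈ S) → (p 0)⁻¹ * p k ∈ (insert (1:G) S) ^ k := by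
  intro k
  induction k with
  | zero => intro _; simp
  | succ k ih =>
    intro h
    have h1 := ih (fun i hi => h i (by omega))
    have h2 : (p 0)⁻¹ * p (k+1) = ((p 0)⁻¹ * p k) * ((p k)⁻¹ * p (k+1)) := by group
    rw [h2, pow_succ]
    exact Finset.mul_mem_mul h1 (Finset.mem_insert_of_mem (h k (by omega)))

private lemma ultra_exists_const {α : Type} (U : Ultrafilter ℕ) (f : ℕ → α) (s : Set α)
    (hs : s.Finite) (h : ∀ᶠ n in (U : Filter ℕ), f n ∈ s) :
    ∃ a, ∀ᶠ n in (U : Filter ℕ), f n = a := by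
  revert h
  refine Set.Finite.induction_on
    (motive := fun t _ => (∀ᶠ n in (U : Filter ℕ), f n ∈ t) → ∃ a, ∀ᶠ n in (U : Filter ℕ), f n = a)
    s hs ?_ ?_
  · intro h
    obtain ⟨n, hn⟩ := h.exists
    exact absurd hn (Set.notMem_empty _)
  · intro a t _ _ ih h
    have h' : ∀ᶠ n in (U : Filter ℕ), f n = a ∨ f n ∈ t :=
      h.mono (fun n hn => by simpa [Set.mem_insert_iff] using hn)
    rcases Ultrafilter.eventually_or.1 h' with h1 | h2
    · exact ⟨_, h1⟩
    · exact ih h2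

private lemma long_injective_path {G : Type} [Group G] [DecidableEq G] (S : Finset G)
    (X : Set G) (hXinf : X.Infinite)
    (hconn : ∀ g ∈ X, ∀ h ∈ X, ∃ (k : ℕ) (p : ℕ → G),
      p 0 = g ∧ p k = h ∧ (∀ i ≤ k, p i ∈ X) ∧ (∀ i < k, (p i)⁻¹ * p (i + 1) ∈ S))
    (m : ℕ) :
    ∃ σ : ℕ → G, (∀ k ≤ m, σ k ∈ X) ∧ (∀ k < m, (σ k)⁻¹ * σ (k+1) ∈ S) ∧
      (∀ k l, k ≤ m → l ≤ m → σ k = σ l → k = l) := by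
  classical
  obtain ⟨g0, hg0⟩ := hXinf.nonempty
  obtain ⟨h, hh, hballh⟩ :=
    hXinf.exists_notMem_finset (Finset.image (g0 * ·) ((insert (1:G) S) ^ m))
  let P : ℕ → Prop := fun k => ∃ p : ℕ → G, p 0 = g0 ∧ p k = h ∧
      (∀ i ≤ k, p i ∈ X) ∧ (∀ i < k, (p i)⁻¹ * p (i+1) ∈ S)
  have hP : ∃ k, P k := by
    obtain ⟨k, p, h1, h2, h3, h4⟩ := hconn g0 hg0 h hh
    exact ⟨k, p, h1, h2, h3, h4⟩
  set k := Nat.find hP with hkdef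
  obtain ⟨p, hp0, hpk, hpX, hpS⟩ : P k := Nat.find_spec hP
  have hkm : m < k := by
    by_contra hle
    push_neg at hle
    have h1 := snake_path_mem_pow S p k hpS
    rw [hp0, hpk] at h1
    have h2 : g0⁻¹ * h ∈ (insert (1:G) S) ^ m :=
      Finset.pow_subset_pow_right (Finset.mem_insert_self _ _) hle h1
    exact hballh (Finset.mem_image.2 ⟨_, h2, by group⟩)
  have hinj : ∀ a b, a ≤ k → b ≤ k → p a = p b → a = b := by
    intro a b ha hb hab
    by_contra hne
    wlog hlt : a < b generalizing a b
    · exact this b a hb ha hab.symm (Ne.symm hne) (by omega)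
    set d := b - a with hd
    have hPnew : P (k - d) := by
      refine ⟨fun i => if i ≤ a then p i else p (i + d), ?_, ?_, ?_, ?_⟩
      · simpa using hp0
      · by_cases hc : k - d ≤ a
        · have hka : k - d = a := by omega
          have hkb : k = b := by omega
          simp only [if_pos hc, hka, hab, ← hkb, hpk, le_refl, if_true]
        · have : k - d + d = k := by omega
          simp only [if_neg hc, this, hpk]
      · intro i hi
        by_cases hc : i ≤ a
        · simpa [hc] using hpX i (by omega)
        · simpa [hc] using hpX (i + d) (by omega)
      · intro i hi
        by_cases hc : i + 1 ≤ a
        · simpa [hc, show i ≤ a by omega] using hpS i (by omega)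
        · by_cases hc2 : i ≤ a
          · have hia : i = a := by omega
            have h1 : ¬ (i + 1 ≤ a) := hc
            simp only [if_pos hc2, if_neg h1]
            have : i + 1 + d = b + 1 := by omega
            rw [this, hia, hab]
            exact hpS b (by omega)
          · simp only [if_neg hc2, if_neg hc]
            have : i + 1 + d = (i + d) + 1 := by omega
            rw [this]
            exact hpS (i + d) (by omega)
    exact absurd hPnew (Nat.find_min hP (by omega))
  exact ⟨p, fun i hi => hpX i (by omega), fun i hi => hpS i (by omega),
    fun a b ha hb => hinj a b (by omega) (by omega)⟩


/-!
STATEMENT 10: Let `G` be a group, `S ⊆ G` a finite symmetric generating set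
(`S = S⁻¹`, `1 ∉ S`) and `Θ = (C, D)` a tileset over `(G, S)`.  The following are
equivalent:
(1) `G` admits a strong infinite `Θ`-snake;
(2) there is an infinite subset `X ⊆ G`, connected in the Cayley graph of `(G, S)`
    (any two elements of `X` are joined by a finite path inside `X` with all steps
    in `S`), together with a colouring `x : X → C` such that
    `(x g, s, x (g * s)) ∈ D` for all `g ∈ X` and `s ∈ S` with `g * s ∈ X`.
-/

theorem strong_infinite_snake_iff_infinite_connected_tiled_subset
    {G : Type} [Group G] (S : Finset G)
    (hS : Subgroup.closure (S : Set G) = ⊤)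
    (hsymm : ∀ s ∈ S, s⁻¹ ∈ S) (hone : (1 : G) ∉ S)
    (C : Type) [Fintype C] (D : Set (C × S × C)) :
    -- (1) a strong infinite Θ-snake exists
    (∃ (ω : ℤ → G) (x : ℤ → C),
        Function.Injective ω ∧
        (∀ i : ℤ, (ω i)⁻¹ * ω (i + 1) ∈ S) ∧
        (∀ i j : ℤ, ∀ s : S, ω j = ω i * (s : G) → (x i, (s, x j)) ∈ D))
    ↔
    -- (2) an infinite Cayley-connected subset X ⊆ G with a valid colouring exists
    (∃ X : Set G,
        X.Infinite ∧
        -- X is connected in the Cayley graph of (G, S)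
        (∀ g ∈ X, ∀ h ∈ X, ∃ (k : ℕ) (p : ℕ → G),
          p 0 = g ∧ p k = h ∧ (∀ i ≤ k, p i ∈ X) ∧
          (∀ i < k, (p i)⁻¹ * p (i + 1) ∈ S)) ∧
        -- a colouring of X satisfying all the domino constraints inside X
        (∃ x : X → C, ∀ (g : X) (s : S), ∀ hgs : (g : G) * (s : G) ∈ X,
          (x g, (s, x ⟨(g : G) * (s : G), hgs⟩)) ∈ D)) := by
  classical
  constructor
  · rintro ⟨ω, x, hinj, hstep, hstrong⟩
    refine ⟨Set.range ω, Set.infinite_range_of_injective hinj, ?_, ?_⟩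
    · rintro g ⟨i, rfl⟩ h ⟨j, rfl⟩
      rcases le_or_gt i j with hij | hij
      · refine ⟨(j - i).toNat, fun m => ω (i + m), by simp, ?_, fun m _ => ⟨_, rfl⟩, ?_⟩
        · show ω (i + ((j - i).toNat : ℤ)) = ω j
          rw [show i + (((j - i).toNat : ℤ)) = j from by omega]
        · intro m hm
          show (ω (i + (m:ℤ)))⁻¹ * ω (i + ((m+1 : ℕ) : ℤ)) ∈ S
          rw [show (i + ((m+1:ℕ):ℤ)) = (i + m) + 1 from by push_cast; ring]
          exact hstep (i + m)
      · refine ⟨(i - j).toNat, fun m => ω (i - m), by simp, ?_, fun m _ => ⟨_, rfl⟩, ?_⟩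
        · show ω (i - ((i - j).toNat : ℤ)) = ω j
          rw [show i - (((i - j).toNat : ℤ)) = j from by omega]
        · intro m hm
          show (ω (i - (m:ℤ)))⁻¹ * ω (i - ((m+1 : ℕ) : ℤ)) ∈ S
          have h1 : (i - ((m+1:ℕ):ℤ)) + 1 = i - m := by push_cast; ring
          have h2 := hstep (i - ((m+1:ℕ):ℤ))
          rw [h1] at h2
          have h3 : (ω (i - (↑m:ℤ)))⁻¹ * ω (i - ((↑(m+1):ℤ))) =
              ((ω (i - ((↑(m+1):ℤ))))⁻¹ * ω (i - (↑m:ℤ)))⁻¹ := by group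
          rw [h3]
          exact hsymm _ h2
    · refine ⟨fun g => x (Classical.choose g.2), ?_⟩
      intro g s hgs
      have hi := Classical.choose_spec g.2
      have hj := Classical.choose_spec hgs
      exact hstrong _ _ s (by rw [hj, hi])
  · rintro ⟨X, hXinf, hconn, xX, hxX⟩
    obtain ⟨g0, hg0⟩ := hXinf.nonempty
    have hCne : Nonempty C := ⟨xX ⟨g0, hg0⟩⟩
    choose σ hmem hstep hinj using fun n => long_injective_path S X hXinf hconn (2*n)
    let τ : ℕ → ℤ → G := fun n i => (σ n n)⁻¹ * σ n (((n:ℤ) + i).toNat)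
    let cc : ℕ → ℤ → C := fun n i =>
      if h : ((n:ℤ) + i).toNat ≤ 2*n then xX ⟨σ n (((n:ℤ) + i).toNat), hmem n _ h⟩
      else Classical.arbitrary C
    have hτdef : ∀ n i, τ n i = (σ n n)⁻¹ * σ n (((n:ℤ) + i).toNat) := fun n i => rfl
    have hccdef : ∀ (n : ℕ) (i : ℤ) (h : ((n:ℤ)+i).toNat ≤ 2*n),
        cc n i = xX ⟨σ n (((n:ℤ) + i).toNat), hmem n _ h⟩ := fun n i h => dif_pos h
    have hτpow : ∀ (i : ℤ) (n : ℕ), i.natAbs ≤ n → τ n i ∈ (insert (1:G) S) ^ i.natAbs := by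
      intro i n hn
      rcases le_or_gt 0 i with hi | hi
      · have h1 := snake_path_mem_pow S (fun k => σ n (n + k)) i.natAbs
          (fun k hk => hstep n (n+k) (by omega))
        rw [hτdef, show ((n:ℤ)+i).toNat = n + i.natAbs from by omega]
        have h2 : (σ n (n+0))⁻¹ * σ n (n + i.natAbs) ∈ insert (1:G) S ^ i.natAbs := h1
        rwa [Nat.add_zero] at h2
      · have key : ∀ k < i.natAbs,
            ((fun k => σ n (n - k)) k)⁻¹ * (fun k => σ n (n - k)) (k+1) ∈ S := by
          intro k hk
          have h2 := hstep n (n - (k+1)) (by omega)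
          have h3 : n - (k+1) + 1 = n - k := by omega
          rw [h3] at h2
          have h4 : (σ n (n - k))⁻¹ * σ n (n - (k+1)) =
              ((σ n (n-(k+1)))⁻¹ * σ n (n - k))⁻¹ := by group
          show (σ n (n - k))⁻¹ * σ n (n - (k+1)) ∈ S
          rw [h4]
          exact hsymm _ h2
        have h1 := snake_path_mem_pow S (fun k => σ n (n - k)) i.natAbs key
        rw [hτdef, show ((n:ℤ)+i).toNat = n - i.natAbs from by omega]
        have h2 : (σ n (n-0))⁻¹ * σ n (n - i.natAbs) ∈ insert (1:G) S ^ i.natAbs := h1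
        rwa [Nat.sub_zero] at h2
    haveI : (Filter.cofinite : Filter ℕ).NeBot := Nat.cofinite_eq_atTop ▸ Filter.atTop_neBot
    let U : Ultrafilter ℕ := Ultrafilter.of Filter.cofinite
    have hUlarge : ∀ N : ℕ, ∀ᶠ n in (U : Filter ℕ), N ≤ n := by
      intro N
      apply Filter.Eventually.filter_mono (Ultrafilter.of_le _)
      rw [Nat.cofinite_eq_atTop]
      exact Filter.eventually_ge_atTop N
    have hconst : ∀ i : ℤ, ∃ v : G × C, ∀ᶠ n in (U : Filter ℕ), (τ n i, cc n i) = v := by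
      intro i
      apply ultra_exists_const U (fun n => (τ n i, cc n i))
        ((↑((insert (1:G) S) ^ i.natAbs) : Set G) ×ˢ (Set.univ : Set C))
        (((insert (1:G) S ^ i.natAbs)).finite_toSet.prod Set.finite_univ)
      filter_upwards [hUlarge i.natAbs] with n hn
      exact ⟨hτpow i n hn, trivial⟩
    choose F hF using hconst
    have hpair : ∀ i j : ℤ, ∃ n : ℕ, i.natAbs ≤ n ∧ j.natAbs ≤ n ∧
        τ n i = (F i).1 ∧ τ n j = (F j).1 ∧ cc n i = (F i).2 ∧ cc n j = (F j).2 := by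
      intro i j
      obtain ⟨n, h1, h2, h3, h4⟩ :=
        ((hUlarge i.natAbs).and ((hUlarge j.natAbs).and ((hF i).and (hF j)))).exists
      exact ⟨n, h1, h2, congrArg Prod.fst h3, congrArg Prod.fst h4,
        congrArg Prod.snd h3, congrArg Prod.snd h4⟩
    refine ⟨fun i => (F i).1, fun i => (F i).2, ?_, ?_, ?_⟩
    · intro i j hij
      obtain ⟨n, hi, hj, e1, e2, _, _⟩ := hpair i j
      have hij : (F i).1 = (F j).1 := hij
      rw [← e1, ← e2, hτdef, hτdef] at hij
      have h1 := mul_left_cancel hij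
      have h2 := hinj n _ _ (by omega) (by omega) h1
      omega
    · intro i
      obtain ⟨n, hi, hj, e1, e2, _, _⟩ := hpair i (i+1)
      show ((F i).1)⁻¹ * (F (i+1)).1 ∈ S
      rw [← e1, ← e2, hτdef, hτdef]
      have harr : (((n:ℤ) + (i+1)).toNat) = ((n:ℤ)+i).toNat + 1 := by omega
      rw [harr]
      have h1 : ((σ n n)⁻¹ * σ n (((n:ℤ)+i).toNat))⁻¹ *
          ((σ n n)⁻¹ * σ n ((((n:ℤ)+i).toNat)+1)) =
          (σ n (((n:ℤ)+i).toNat))⁻¹ * σ n ((((n:ℤ)+i).toNat)+1) := by group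
      rw [h1]
      exact hstep n _ (by omega)
    · intro i j s hω
      obtain ⟨n, hi, hj, e1, e2, e3, e4⟩ := hpair i j
      have hω' : (F j).1 = (F i).1 * (s:G) := hω
      have hτeq : τ n j = τ n i * (s:G) := by rw [e1, e2]; exact hω'
      rw [hτdef, hτdef] at hτeq
      rw [mul_assoc] at hτeq
      have hσ : σ n (((n:ℤ)+j).toNat) = σ n (((n:ℤ)+i).toNat) * (s:G) :=
        mul_left_cancel hτeq
      have hki : ((n:ℤ)+i).toNat ≤ 2*n := by omega
      have hkj : ((n:ℤ)+j).toNat ≤ 2*n := by omega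
      have hmemi := hmem n _ hki
      have hXs : (σ n (((n:ℤ)+i).toNat) : G) * (s:G) ∈ X := by
        rw [← hσ]; exact hmem n _ hkj
      have hD := hxX ⟨σ n (((n:ℤ)+i).toNat), hmemi⟩ s hXs
      have hc1 : cc n i = xX ⟨σ n (((n:ℤ)+i).toNat), hmemi⟩ := hccdef n i hki
      have hc2 : cc n j = xX ⟨σ n (((n:ℤ)+j).toNat), hmem n _ hkj⟩ := hccdef n j hkj
      have hsub : (⟨(σ n (((n:ℤ)+i).toNat) : G) * (s:G), hXs⟩ : X) =
          ⟨σ n (((n:ℤ)+j).toNat), hmem n _ hkj⟩ := Subtype.ext hσ.symm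
      show ((F i).2, (s, (F j).2)) ∈ D
      rw [← e3, ← e4, hc1, hc2, ← hsub]
      exact hD
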